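/- Let G be a controllable graph on n vertices with adjacency matrix A, let L be a positive integer, and suppose ξ₁, …, ξₙ are integer vectors satisfying: ξᵢᵀξᵢ = L², eᵀξᵢ = L, ξᵢᵀAξᵢ = 0 for all i, and for all i ≠ j, ξᵢᵀξⱼ = 0 and ξᵢᵀAξⱼ ∈ {0, L²}. Then Q := (1/L)[ξ₁,…,ξₙ] is a regular orthogonal matrix and QᵀAQ is a symmetric 0-1 matrix with zero diagonal, i.e., the adjacency matrix of a graph. -/

import Mathlib

open Matrix

def IsAdjacency {n : ℕ} (M : Matrix (Fin n) (Fin n) ℚ) : Prop :=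
  Mᵀ = M ∧ (∀ i, M i i = 0) ∧ (∀ i j, M i j = 0 ∨ M i j = 1)

def walkMatrix {n : ℕ} (A : Matrix (Fin n) (Fin n) ℚ) : Matrix (Fin n) (Fin n) ℚ :=
  Matrix.of fun i j => ((A ^ (j : ℕ)).mulVec (fun _ => 1)) i

theorem stmt9 (n : ℕ) (A : Matrix (Fin n) (Fin n) ℚ)
    (hA : IsAdjacency A) (hctrl : IsUnit (walkMatrix A).det)
    (L : ℕ) (hL : 0 < L) (ξ : Fin n → (Fin n → ℚ))
    (hint : ∀ i j, ∃ z : ℤ, ξ i j = (z : ℚ))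
    (hnorm : ∀ i, dotProduct (ξ i) (ξ i) = (L : ℚ) ^ 2)
    (hsum : ∀ i, ∑ r, ξ i r = (L : ℚ))
    (hdiag : ∀ i, dotProduct (ξ i) (A.mulVec (ξ i)) = 0)
    (horth : ∀ i j, i ≠ j → dotProduct (ξ i) (ξ j) = 0)
    (hcross : ∀ i j, i ≠ j →
      dotProduct (ξ i) (A.mulVec (ξ j)) = 0 ∨
      dotProduct (ξ i) (A.mulVec (ξ j)) = (L : ℚ) ^ 2)
    (Q : Matrix (Fin n) (Fin n) ℚ) (hQ : Q = Matrix.of fun r c => ξ c r / (L : ℚ)) :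
    (Qᵀ * Q = 1) ∧ (Q.mulVec (fun _ => 1) = fun _ => 1) ∧
    IsAdjacency (Qᵀ * A * Q) := by
  have hL0 : (L : ℚ) ≠ 0 := by exact_mod_cast hL.ne'
  have hL2 : (L : ℚ) ^ 2 ≠ 0 := pow_ne_zero _ hL0
  -- entry formula for QᵀQ
  have hQQ : ∀ i j, (Qᵀ * Q) i j = dotProduct (ξ i) (ξ j) / (L : ℚ) ^ 2 := by
    intro i j
    simp only [hQ, Matrix.mul_apply, Matrix.transpose_apply, Matrix.of_apply,
      dotProduct, Finset.sum_div]
    congr 1; ext r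
    rw [div_mul_div_comm, sq]
  have h1 : Qᵀ * Q = 1 := by
    ext i j
    rw [hQQ]
    by_cases h : i = j
    · subst h; simp [hnorm i, hL2]
    · simp [horth i j h, Matrix.one_apply_ne h]
  -- entry formula for QᵀAQ
  have hQAQ : ∀ i j, (Qᵀ * A * Q) i j =
      dotProduct (ξ i) (A.mulVec (ξ j)) / (L : ℚ) ^ 2 := by
    intro i j
    simp only [hQ, Matrix.mul_apply, Matrix.transpose_apply, Matrix.of_apply,
      dotProduct, Matrix.mulVec, Finset.sum_div, Finset.sum_mul,
      Finset.mul_sum]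
    rw [Finset.sum_comm]
    congr 1; ext r
    congr 1; ext s
    field_simp
  -- Qᵀ e = e
  have hQTe : Qᵀ.mulVec (fun _ => 1) = fun _ => 1 := by
    ext c
    simp [hQ, Matrix.mulVec, dotProduct, ← Finset.sum_div, hsum c, hL0]
  have h2 : Q.mulVec (fun _ => 1) = fun _ => 1 := by
    have hQQT : Q * Qᵀ = 1 := mul_eq_one_comm.mp h1
    have := congrArg (fun v => Q.mulVec v) hQTe
    simpa [Matrix.mulVec_mulVec, hQQT] using this.symm
  refine ⟨h1, h2, ?_, ?_, ?_⟩
  · have hAT : Aᵀ = A := hA.1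
    calc (Qᵀ * A * Q)ᵀ = Qᵀ * Aᵀ * Q := by
          simp [Matrix.transpose_mul, Matrix.mul_assoc]
      _ = Qᵀ * A * Q := by rw [hAT]
  · intro i
    rw [hQAQ, hdiag i, zero_div]
  · intro i j
    by_cases h : i = j
    · subst h; left; rw [hQAQ, hdiag i, zero_div]
    · rcases hcross i j h with hc | hc
      · left; rw [hQAQ, hc, zero_div]
      · right; rw [hQAQ, hc, div_self hL2]
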